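/- Both improper integrals below converge and satisfy the identity ∫_{1}^{∞} ( y²/√(y⁴ − 1) − 1 ) dy + ∫_{1}^{∞} dy/(y²·√(y⁴ − 1)) = 1. -/

import Mathlib

open MeasureTheory Real Set Filter Topology

set_option maxHeartbeats 1000000 in
theorem adS5_wilson_loop_integration_by_parts :
    IntegrableOn (fun y : ℝ => y ^ 2 / Real.sqrt (y ^ 4 - 1) - 1) (Ioi 1) ∧
    IntegrableOn (fun y : ℝ => 1 / (y ^ 2 * Real.sqrt (y ^ 4 - 1))) (Ioi 1) ∧
    (∫ y in Ioi (1 : ℝ), (y ^ 2 / Real.sqrt (y ^ 4 - 1) - 1)) +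
      (∫ y in Ioi (1 : ℝ), 1 / (y ^ 2 * Real.sqrt (y ^ 4 - 1))) = 1 := by
  set g : ℝ → ℝ := fun y => Real.sqrt (y ^ 4 - 1) / y - y with hgdef
  set φ : ℝ → ℝ := fun y =>
    (y ^ 2 / Real.sqrt (y ^ 4 - 1) - 1) + 1 / (y ^ 2 * Real.sqrt (y ^ 4 - 1)) with hφdef
  have hfacts : ∀ x ∈ Ioi (1:ℝ), 0 < x ∧ 0 < x ^ 4 - 1 ∧ 0 < Real.sqrt (x ^ 4 - 1) ∧
      Real.sqrt (x ^ 4 - 1) ≤ x ^ 2 := by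
    intro x hx
    have hx1 : (1:ℝ) < x := hx
    have hx0 : 0 < x := by linarith
    have h4 : (1:ℝ) < x ^ 4 := one_lt_pow₀ hx1 (by norm_num)
    have hu : 0 < x ^ 4 - 1 := by linarith
    refine ⟨hx0, hu, Real.sqrt_pos.2 hu, ?_⟩
    calc Real.sqrt (x ^ 4 - 1) ≤ Real.sqrt (x ^ 4) := Real.sqrt_le_sqrt (by linarith)
      _ = x ^ 2 := by
          rw [show x ^ 4 = (x ^ 2) ^ 2 by ring, Real.sqrt_sq (by positivity)]
  have hderiv : ∀ x ∈ Ioi (1:ℝ), HasDerivAt g (φ x) x := by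
    intro x hx
    obtain ⟨hx0, hu, hs, hle⟩ := hfacts x hx
    have h1 : HasDerivAt (fun y : ℝ => y ^ 4 - 1) (4 * x ^ 3) x := by
      simpa using (hasDerivAt_pow 4 x).sub_const 1
    have h2 : HasDerivAt (fun y : ℝ => Real.sqrt (y ^ 4 - 1))
        (1 / (2 * Real.sqrt (x ^ 4 - 1)) * (4 * x ^ 3)) x :=
      (Real.hasDerivAt_sqrt hu.ne').comp x h1
    have h3 := (h2.div (hasDerivAt_id x) hx0.ne').sub (hasDerivAt_id x)
    convert h3 using 1
    · rfl
    · rfl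
    · rfl
    have hsq : Real.sqrt (x ^ 4 - 1) * Real.sqrt (x ^ 4 - 1) = x ^ 4 - 1 :=
      Real.mul_self_sqrt hu.le
    simp only [hφdef, id_eq]
    field_simp
    linear_combination 2 * hsq
  have hφnonneg : ∀ x ∈ Ioi (1:ℝ), 0 ≤ φ x := by
    intro x hx
    obtain ⟨hx0, hu, hs, hle⟩ := hfacts x hx
    have h1 : (1:ℝ) ≤ x ^ 2 / Real.sqrt (x ^ 4 - 1) :=
      (le_div_iff₀ hs).2 (by simpa using hle)
    have h2 : 0 ≤ 1 / (x ^ 2 * Real.sqrt (x ^ 4 - 1)) := by positivity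
    simp only [hφdef]; linarith
  have hcont : ContinuousWithinAt g (Ici 1) 1 := by
    have : ContinuousOn g (Ici 1) := by
      apply ContinuousOn.sub _ continuousOn_id
      apply ContinuousOn.div
      · exact (continuous_sqrt.comp (by continuity)).continuousOn
      · exact continuousOn_id
      · intro x hx; have h1 : (1:ℝ) ≤ x := hx; positivity
    exact this.continuousWithinAt (by simp)
  have hlim : Tendsto g atTop (𝓝 0) := by
    have hlow : Tendsto (fun y : ℝ => -(1 / y ^ 3)) atTop (𝓝 0) := by
      have h : Tendsto (fun y : ℝ => 1 / y ^ 3) atTop (𝓝 0) := by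
        simp only [one_div]
        exact (tendsto_pow_atTop (n := 3) (by norm_num)).inv_tendsto_atTop
      simpa using h.neg
    refine tendsto_of_tendsto_of_tendsto_of_le_of_le' hlow tendsto_const_nhds ?_ ?_
    · filter_upwards [eventually_gt_atTop (1:ℝ)] with x hx
      obtain ⟨hx0, hu, hs, hle⟩ := hfacts x hx
      have hsq : Real.sqrt (x ^ 4 - 1) * Real.sqrt (x ^ 4 - 1) = x ^ 4 - 1 :=
        Real.mul_self_sqrt hu.le
      have key : x ^ 4 - 1 ≤ x ^ 2 * Real.sqrt (x ^ 4 - 1) := by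
        nlinarith [mul_le_mul_of_nonneg_right hle hs.le]
      have h3 : (0:ℝ) < x ^ 3 := by positivity
      have heq : g x + 1 / x ^ 3 = (x ^ 2 * Real.sqrt (x ^ 4 - 1) - (x ^ 4 - 1)) / x ^ 3 := by
        simp only [hgdef]; field_simp; ring
      have hnn : 0 ≤ g x + 1 / x ^ 3 := by
        rw [heq]; exact div_nonneg (by linarith) h3.le
      linarith
    · filter_upwards [eventually_gt_atTop (1:ℝ)] with x hx
      obtain ⟨hx0, hu, hs, hle⟩ := hfacts x hx
      simp only [hgdef]
      have : Real.sqrt (x ^ 4 - 1) / x ≤ x := by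
        rw [div_le_iff₀ hx0]; nlinarith
      linarith
  have hint : IntegrableOn φ (Ioi 1) volume :=
    integrableOn_Ioi_deriv_of_nonneg hcont hderiv hφnonneg hlim
  have hval : (∫ y in Ioi (1:ℝ), φ y) = 0 - g 1 :=
    integral_Ioi_of_hasDerivAt_of_nonneg hcont hderiv hφnonneg hlim
  have hg1 : g 1 = -1 := by simp [hgdef]
  have hmeas2 : AEStronglyMeasurable (fun y : ℝ => 1 / (y ^ 2 * Real.sqrt (y ^ 4 - 1)))
      (volume.restrict (Ioi 1)) := by
    refine ContinuousOn.aestronglyMeasurable ?_ measurableSet_Ioi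
    refine ContinuousOn.div continuousOn_const ?_ ?_
    · exact ((continuous_pow 2).mul (continuous_sqrt.comp (by continuity))).continuousOn
    · intro x hx
      obtain ⟨hx0, hu, hs, hle⟩ := hfacts x hx
      positivity
  have hint2 : IntegrableOn (fun y : ℝ => 1 / (y ^ 2 * Real.sqrt (y ^ 4 - 1))) (Ioi 1) := by
    refine hint.mono' hmeas2 ?_
    filter_upwards [ae_restrict_mem measurableSet_Ioi] with x hx
    obtain ⟨hx0, hu, hs, hle⟩ := hfacts x hx
    have h1 : (1:ℝ) ≤ x ^ 2 / Real.sqrt (x ^ 4 - 1) :=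
      (le_div_iff₀ hs).2 (by simpa using hle)
    have h2 : 0 ≤ 1 / (x ^ 2 * Real.sqrt (x ^ 4 - 1)) := by positivity
    rw [Real.norm_eq_abs, abs_of_nonneg h2]
    simp only [hφdef]; linarith
  have hint1 : IntegrableOn (fun y : ℝ => y ^ 2 / Real.sqrt (y ^ 4 - 1) - 1) (Ioi 1) := by
    have h := hint.sub hint2
    have heq : (φ - fun y : ℝ => 1 / (y ^ 2 * Real.sqrt (y ^ 4 - 1))) =
        fun y : ℝ => y ^ 2 / Real.sqrt (y ^ 4 - 1) - 1 := by
      funext y; simp [hφdef]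
    rw [heq] at h
    exact h
  refine ⟨hint1, hint2, ?_⟩
  rw [← integral_add hint1 hint2]
  have : (∫ y in Ioi (1:ℝ), ((y ^ 2 / Real.sqrt (y ^ 4 - 1) - 1) +
      1 / (y ^ 2 * Real.sqrt (y ^ 4 - 1)))) = ∫ y in Ioi (1:ℝ), φ y := rfl
  rw [this, hval, hg1]
  norm_num
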